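/- Let B ⊆ {0,1}^n be a code all of whose distinct pairs are F-distinguishable, where F is the complete graph on {00,01,10}. If some x ∈ B contains the substring 111, then replacing one occurrence of 111 in x by 101 yields a string z ∉ B such that (B \ {x}) ∪ {z} is again a pairwise F-distinguishable code of the same cardinality. -/

import Mathlib

def bpair (x : List Bool) (i : ℕ) : Bool × Bool := (x.getD i false, x.getD (i+1) false)

/-- `F`-distinguishability: `F` is the complete graph on `{00, 01, 10}`. -/
def Fdist (n : ℕ) (x y : List Bool) : Prop :=
  ∃ i, i + 1 < n ∧ bpair x i ≠ bpair y i ∧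
    bpair x i ≠ (true, true) ∧ bpair y i ≠ (true, true)

lemma getD_zmx (u v : List Bool) (j : ℕ) (hj : j ≠ u.length + 1) :
    (u ++ [true, false, true] ++ v).getD j false
      = (u ++ [true, true, true] ++ v).getD j false := by
  rw [List.append_assoc, List.append_assoc]
  rcases Nat.lt_or_ge j u.length with h | h
  · rw [List.getD_append _ _ _ _ h, List.getD_append _ _ _ _ h]
  · rw [List.getD_append_right _ _ _ _ h, List.getD_append_right _ _ _ _ h]
    obtain ⟨m, rfl⟩ : ∃ m, j = u.length + m := ⟨j - u.length, by omega⟩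
    rw [Nat.add_sub_cancel_left]
    have hm1 : m ≠ 1 := by omega
    rcases Nat.lt_or_ge m 3 with h3 | h3
    · interval_cases m <;> simp_all
    · rw [List.getD_append_right _ _ _ _ (by simpa using h3),
        List.getD_append_right _ _ _ _ (by simpa using h3)]
      simp

lemma bpair_x_tt (u v : List Bool) {i : ℕ} (hi : i = u.length ∨ i = u.length + 1) :
    bpair (u ++ [true, true, true] ++ v) i = (true, true) := by
  have key : ∀ j, j = u.length ∨ j = u.length + 1 ∨ j = u.length + 2 →
      (u ++ [true, true, true] ++ v).getD j false = true := by
    intro j hj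
    rw [List.append_assoc, List.getD_append_right _ _ _ _ (by omega)]
    rcases hj with h | h | h <;> subst h <;> simp
  unfold bpair
  rcases hi with h | h <;> subst h <;>
    rw [key _ (by omega), key _ (by omega)]

lemma bpair_z_eq (u v : List Bool) {i : ℕ}
    (h1 : i ≠ u.length) (h2 : i ≠ u.length + 1) :
    bpair (u ++ [true, false, true] ++ v) i = bpair (u ++ [true, true, true] ++ v) i := by
  unfold bpair
  rw [getD_zmx u v i h2, getD_zmx u v (i+1) (by omega)]

/-- From `Fdist x y` with `x = u ++ 111 ++ v`, get `Fdist z y` with `z = u ++ 101 ++ v`. -/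
lemma Fdist_z (n : ℕ) (u v y : List Bool)
    (h : Fdist n (u ++ [true, true, true] ++ v) y) :
    Fdist n (u ++ [true, false, true] ++ v) y := by
  obtain ⟨i, hin, hne, hxtt, hytt⟩ := h
  have h1 : i ≠ u.length := by
    rintro rfl; exact hxtt (bpair_x_tt u v (Or.inl rfl))
  have h2 : i ≠ u.length + 1 := by
    rintro rfl; exact hxtt (bpair_x_tt u v (Or.inr rfl))
  refine ⟨i, hin, ?_, ?_, hytt⟩ <;> rw [bpair_z_eq u v h1 h2] <;> assumption

/-- Replacing an occurrence of 111 in a codeword by 101 preserves pairwise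
`F`-distinguishability and the cardinality of the code. -/
theorem stmt4 (n : ℕ) (B : Set (List Bool)) (hB : ∀ x ∈ B, x.length = n)
    (hdist : B.Pairwise (Fdist n))
    (x : List Bool) (hx : x ∈ B) (u v : List Bool)
    (hsplit : x = u ++ [true, true, true] ++ v)
    (z : List Bool) (hz : z = u ++ [true, false, true] ++ v) :
    z ∉ B ∧ (∀ w ∈ (B \ {x}) ∪ {z}, w.length = n) ∧
      ((B \ {x}) ∪ {z} : Set (List Bool)).Pairwise (Fdist n) ∧
      ((B \ {x}) ∪ {z} : Set (List Bool)).ncard = B.ncard := by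
  have hxg : x.getD (u.length + 1) false = true := by
    rw [hsplit, List.append_assoc,
      List.getD_append_right _ _ _ _ (by omega), Nat.add_sub_cancel_left]
    rfl
  have hzg : z.getD (u.length + 1) false = false := by
    rw [hz, List.append_assoc,
      List.getD_append_right _ _ _ _ (by omega), Nat.add_sub_cancel_left]
    rfl
  have hzx : z ≠ x := by
    intro h
    rw [h, hxg] at hzg
    exact absurd hzg (by simp)
  have hFz : ∀ y ∈ B, y ≠ x → Fdist n z y := by
    intro y hy hyx
    rw [hz]
    refine Fdist_z n u v y ?_
    rw [← hsplit]
    exact hdist hx hy (fun h => hyx h.symm)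
  have hznB : z ∉ B := by
    intro hzB
    obtain ⟨i, hin, hne, hztt, _⟩ := hFz z hzB hzx
    exact hne rfl
  have hFsymm : ∀ a b, Fdist n a b → Fdist n b a := by
    rintro a b ⟨i, hin, hne, ha, hb⟩
    exact ⟨i, hin, fun h => hne h.symm, hb, ha⟩
  refine ⟨hznB, ?_, ?_, ?_⟩
  · rintro w (⟨hwB, -⟩ | hw)
    · exact hB w hwB
    · simp only [Set.mem_singleton_iff] at hw
      subst hw
      rw [hz, ← hB x hx, hsplit]
      simp
  · rintro a (⟨haB, hax⟩ | ha) b (⟨hbB, hbx⟩ | hb) hab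
    · exact hdist haB hbB hab
    · simp only [Set.mem_singleton_iff] at hb
      subst hb
      exact hFsymm _ _ (hFz a haB (by simpa using hax))
    · simp only [Set.mem_singleton_iff] at ha
      subst ha
      exact hFz b hbB (by simpa using hbx)
    · simp only [Set.mem_singleton_iff] at ha hb
      exact absurd (ha.trans hb.symm) hab
  · have hzd : z ∉ B \ {x} := fun h => hznB h.1
    rcases B.finite_or_infinite with hfin | hinf
    · have hfd : (B \ {x}).Finite := hfin.diff
      rw [Set.union_singleton, Set.ncard_insert_of_notMem hzd hfd,
        Set.ncard_diff_singleton_add_one hx hfin]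
    · have hinfd : (B \ {x}).Infinite := hinf.diff (Set.finite_singleton x)
      rw [Set.Infinite.ncard hinf, Set.Infinite.ncard (hinfd.mono Set.subset_union_left)]
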